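/- arXiv:2510.11638 — 5 statements merged into one kernel-verified Lean document; each statement's English description precedes it below -/
import Mathlib

section
/- Let a ≤ b < c be side lengths of an obtuse triangle (a+b>c, a²+b²<c²), let Δ = -a⁴-b⁴-c⁴+2a²b²+2b²c²+2c²a², h = √Δ/a, and for 0 < ε < h set ℓ(ε) = √((Δ - a²ε²)/(b² - (ε/2)²)). Then ℓ(ε) < 2·√(c² - (ε/2)²). -/
theorem stmt2 (a b c ε : ℝ) (ha : 0 < a) (hab : a ≤ b) (hbc : b < c)
    (htri : a + b > c) (hobt : a ^ 2 + b ^ 2 < c ^ 2)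
    (Δ : ℝ)
    (hΔ : Δ = -a ^ 4 - b ^ 4 - c ^ 4 + 2 * a ^ 2 * b ^ 2 + 2 * b ^ 2 * c ^ 2 + 2 * c ^ 2 * a ^ 2)
    (hε : 0 < ε) (hεh : ε < Real.sqrt Δ / a) :
    Real.sqrt ((Δ - a ^ 2 * ε ^ 2) / (b ^ 2 - (ε / 2) ^ 2))
      < 2 * Real.sqrt (c ^ 2 - (ε / 2) ^ 2) := by
  have haε : a * ε < Real.sqrt Δ := by
    rw [mul_comm]; rwa [lt_div_iff₀ ha] at hεh
  have h1 : (a * ε) ^ 2 < Δ := by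
    have := (Real.lt_sqrt (by positivity)).mp haε
    linarith
  have hΔ4 : Δ ≤ 4 * a ^ 2 * b ^ 2 := by nlinarith [sq_nonneg (a^2 + b^2 - c^2)]
  have hε2b : ε ^ 2 < 4 * b ^ 2 := by
    nlinarith [sq_nonneg (a*ε)]
  have hden : (0:ℝ) < b ^ 2 - (ε / 2) ^ 2 := by nlinarith
  have hc : (0:ℝ) < c ^ 2 - (ε / 2) ^ 2 := by nlinarith
  have hbase : 0 < b ^ 2 + c ^ 2 - a ^ 2 - ε ^ 2 / 2 := by nlinarith
  have key : (Δ - a ^ 2 * ε ^ 2) / (b ^ 2 - (ε / 2) ^ 2) < 4 * (c ^ 2 - (ε / 2) ^ 2) := by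
    rw [div_lt_iff₀ hden]
    nlinarith [sq_nonneg (b ^ 2 + c ^ 2 - a ^ 2 - ε ^ 2 / 2), mul_pos hbase hbase]
  calc Real.sqrt ((Δ - a ^ 2 * ε ^ 2) / (b ^ 2 - (ε / 2) ^ 2))
      < Real.sqrt (4 * (c ^ 2 - (ε / 2) ^ 2)) := by
        apply Real.sqrt_lt_sqrt (div_nonneg (by nlinarith) hden.le) key
    _ = 2 * Real.sqrt (c ^ 2 - (ε / 2) ^ 2) := by
        rw [Real.sqrt_mul (by norm_num : (0:ℝ) ≤ 4), show (4:ℝ) = 2^2 by norm_num,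
          Real.sqrt_sq (by norm_num : (0:ℝ) ≤ 2)]
end

section
/- Let a ≤ b < c be side lengths of an obtuse triangle with a² + b² < c², and let 0 < ε < √Δ/a where Δ = -a⁴-b⁴-c⁴+2a²b²+2b²c²+2c²a². Set b' = √(b² - (ε/2)²) and c' = √(c² - (ε/2)²). Then the triple (a, b', c') satisfies the strict triangle inequality and 16 times the squared area of the triangle with sides a, b', c' (by Heron's formula) equals Δ - a²ε². -/
set_option maxHeartbeats 1000000


theorem stmt3 (a b c ε : ℝ) (ha : 0 < a) (hab : a ≤ b) (hbc : b < c)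
    (htri : a + b > c) (hobt : a ^ 2 + b ^ 2 < c ^ 2)
    (Δ : ℝ)
    (hΔ : Δ = -a ^ 4 - b ^ 4 - c ^ 4 + 2 * a ^ 2 * b ^ 2 + 2 * b ^ 2 * c ^ 2 + 2 * c ^ 2 * a ^ 2)
    (hε : 0 < ε) (hεh : ε < Real.sqrt Δ / a)
    (b' c' : ℝ)
    (hb' : b' = Real.sqrt (b ^ 2 - (ε / 2) ^ 2))
    (hc' : c' = Real.sqrt (c ^ 2 - (ε / 2) ^ 2)) :
    (a + b' > c' ∧ b' + c' > a ∧ c' + a > b') ∧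
      2 * a ^ 2 * b' ^ 2 + 2 * b' ^ 2 * c' ^ 2 + 2 * c' ^ 2 * a ^ 2
          - a ^ 4 - b' ^ 4 - c' ^ 4
        = Δ - a ^ 2 * ε ^ 2 := by
  have h1 : (0:ℝ) < a + b + c := by linarith
  have h2 : (0:ℝ) < a + b - c := by linarith
  have h3 : (0:ℝ) < b + c - a := by linarith
  have h4 : (0:ℝ) < a + c - b := by linarith
  have hΔpos : 0 < Δ := by
    nlinarith [mul_pos (mul_pos (mul_pos h1 h2) h3) h4]
  have hεa : ε * a < Real.sqrt Δ := (lt_div_iff₀ ha).mp hεh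
  have hsq : Real.sqrt Δ ^ 2 = Δ := Real.sq_sqrt hΔpos.le
  have hΔε : a ^ 2 * ε ^ 2 < Δ := by
    nlinarith [hεa, hsq, Real.sqrt_nonneg Δ, mul_pos hε ha]
  subst hΔ
  have hεb : ε / 2 < b := by
    have hkey : a ^ 2 * ε ^ 2 < 4 * a ^ 2 * b ^ 2 := by
      nlinarith [hΔε, sq_nonneg (a ^ 2 + b ^ 2 - c ^ 2)]
    by_contra h
    push_neg at h
    have h2b : 4 * b ^ 2 ≤ ε ^ 2 := by nlinarith
    nlinarith [mul_le_mul_of_nonneg_left h2b (sq_nonneg a)]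
  have hbpos : (0:ℝ) ≤ b ^ 2 - (ε / 2) ^ 2 :=
    sub_nonneg.mpr (pow_le_pow_left₀ (by positivity) hεb.le 2)
  have hcpos : (0:ℝ) ≤ c ^ 2 - (ε / 2) ^ 2 :=
    sub_nonneg.mpr (pow_le_pow_left₀ (by positivity) (hεb.trans hbc).le 2)
  have hb2 : b' ^ 2 = b ^ 2 - (ε / 2) ^ 2 := by rw [hb']; exact Real.sq_sqrt hbpos
  have hc2 : c' ^ 2 = c ^ 2 - (ε / 2) ^ 2 := by rw [hc']; exact Real.sq_sqrt hcpos
  have hb'nn : 0 ≤ b' := hb' ▸ Real.sqrt_nonneg _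
  have hc'nn : 0 ≤ c' := hc' ▸ Real.sqrt_nonneg _
  have hca : a < c' := by nlinarith [hc2]
  have hcb : b' < c' := by
    rw [hb', hc']
    exact Real.sqrt_lt_sqrt hbpos (by nlinarith)
  refine ⟨⟨?_, by linarith, by linarith⟩, ?_⟩
  · by_contra h
    push_neg at h
    have h5 : (a + b') * (a + b') ≤ c' * c' :=
      mul_self_le_mul_self (by linarith) h
    have h6 : 2 * a * b' ≤ c ^ 2 - a ^ 2 - b ^ 2 := by nlinarith [hb2, hc2, h5]
    have h7 : (2 * a * b') ^ 2 ≤ (c ^ 2 - a ^ 2 - b ^ 2) ^ 2 := by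
      have := mul_nonneg (mul_nonneg (by norm_num : (0:ℝ) ≤ 2) ha.le) hb'nn
      nlinarith [this, h6]
    nlinarith [h7, hb2, hΔε]
  · linear_combination (2 * a ^ 2 + 2 * c' ^ 2 - b' ^ 2 - (b ^ 2 - (ε / 2) ^ 2)) * hb2 +
      (2 * (b ^ 2 - (ε / 2) ^ 2) + 2 * a ^ 2 - c' ^ 2 - (c ^ 2 - (ε / 2) ^ 2)) * hc2
end

section
/- Let N ≥ 2, s > 0, and let Γ be an N-dimensional sphere of radius s in Euclidean space (the set of points at distance s from a center O inside an (N+1)-dimensional affine subspace). For any two distinct points U, V ∈ Γ and any d ∈ (0, 2s), there exist k ∈ ℕ and points X₁,…,X_k ∈ Γ such that ‖U−X₁‖ = ‖X₁−X₂‖ = ⋯ = ‖X_{k−1}−X_k‖ = ‖X_k−V‖ = d. -/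
set_option maxHeartbeats 1000000
open scoped RealInnerProductSpace

lemma sqeq {a b : ℝ} (ha : 0 ≤ a) (hb : 0 ≤ b) (h : a^2 = b^2) : a = b := by
  nlinarith [sq_nonneg (a - b), sq_nonneg (a + b)]

lemma aux_orth (N m : ℕ) (hN : 2 ≤ N) (D : Submodule ℝ (EuclideanSpace ℝ (Fin m)))
    (hD : Module.finrank ℝ D = N + 1) (p q : EuclideanSpace ℝ (Fin m)) :
    ∃ e : EuclideanSpace ℝ (Fin m), e ∈ D ∧ ‖e‖ = 1 ∧ ⟪p, e⟫ = 0 ∧ ⟪q, e⟫ = 0 := by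
  classical
  set L : Submodule ℝ (EuclideanSpace ℝ (Fin m)) := Submodule.span ℝ {p, q} with hL
  have hLfr : Module.finrank ℝ L ≤ 2 := by
    have := finrank_span_le_card (R := ℝ) ({p, q} : Set (EuclideanSpace ℝ (Fin m)))
    refine this.trans ?_
    have : ({p, q} : Set (EuclideanSpace ℝ (Fin m))).toFinset ⊆ {p, q} := by
      intro x hx; simpa using (Set.mem_toFinset.mp hx)
    calc ({p, q} : Set _).toFinset.card ≤ ({p, q} : Finset _).card := Finset.card_le_card this
      _ ≤ 2 := Finset.card_insert_le _ _ |>.trans (by simp)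
  have hm : Module.finrank ℝ (EuclideanSpace ℝ (Fin m)) = m := by simp
  have horth : Module.finrank ℝ Lᗮ + Module.finrank ℝ L = m := by
    rw [add_comm, Submodule.finrank_add_finrank_orthogonal, hm]
  have hsup : Module.finrank ℝ ↥(D ⊔ Lᗮ) ≤ m := by
    conv_rhs => rw [← hm]
    exact Submodule.finrank_le _
  have key : 0 < Module.finrank ℝ ↥(D ⊓ Lᗮ) := by
    have h2 := Submodule.finrank_sup_add_finrank_inf_eq D Lᗮ
    omega
  obtain ⟨e₀, he₀, hne⟩ := exists_mem_ne_zero_of_rank_pos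
    (s := D ⊓ Lᗮ) (by
      rw [← Submodule.finrank_eq_rank]
      exact_mod_cast Nat.cast_pos.mpr key)
  have he₀D : e₀ ∈ D := he₀.1
  have he₀L : e₀ ∈ Lᗮ := he₀.2
  refine ⟨‖e₀‖⁻¹ • e₀, D.smul_mem _ he₀D, ?_, ?_, ?_⟩
  · rw [norm_smul]; simp [norm_ne_zero_iff.mpr hne]
  · rw [real_inner_smul_right]
    have : ⟪p, e₀⟫ = 0 := he₀L p (Submodule.subset_span (by simp))
    simp [this]
  · rw [real_inner_smul_right]
    have : ⟪q, e₀⟫ = 0 := he₀L q (Submodule.subset_span (by simp))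
    simp [this]


lemma aux_step (N m : ℕ) (hN : 2 ≤ N) (s d : ℝ) (hs : 0 < s) (hd : 0 < d)
    (Pl : AffineSubspace ℝ (EuclideanSpace ℝ (Fin m)))
    (hPl : Module.finrank ℝ Pl.direction = N + 1)
    (O : EuclideanSpace ℝ (Fin m)) (hO : O ∈ Pl)
    (P Q : EuclideanSpace ℝ (Fin m)) (hP : P ∈ Pl) (hQ : Q ∈ Pl)
    (hPs : dist P O = s) (hQs : dist Q O = s)
    (hsmall : s^2 * (dist P Q)^2 ≤ d^2 * (4*s^2 - d^2)) (hlt : dist P Q < 2*s) :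
    ∃ X, X ∈ Pl ∧ dist X O = s ∧ dist P X = d ∧ dist X Q = d := by
  classical
  set p : EuclideanSpace ℝ (Fin m) := P - O with hpdef
  set q : EuclideanSpace ℝ (Fin m) := Q - O with hqdef
  have hpD : p ∈ Pl.direction := by
    simpa [hpdef] using AffineSubspace.vsub_mem_direction hP hO
  have hqD : q ∈ Pl.direction := by
    simpa [hqdef] using AffineSubspace.vsub_mem_direction hQ hO
  have hpn : ‖p‖ = s := by rw [hpdef, ← dist_eq_norm]; exact hPs
  have hqn : ‖q‖ = s := by rw [hqdef, ← dist_eq_norm]; exact hQs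
  obtain ⟨e, heD, hen, hpe, hqe⟩ := aux_orth N m hN Pl.direction hPl p q
  set c : ℝ := dist P Q with hcdef
  have hc0 : 0 ≤ c := dist_nonneg
  set t : ℝ := ⟪p, q⟫ with htdef
  have hct : c^2 = 2*s^2 - 2*t := by
    have hpq : P - Q = p - q := by rw [hpdef, hqdef]; abel
    rw [hcdef, dist_eq_norm, hpq, norm_sub_sq_real, hpn, hqn, ← htdef]
    ring
  set A : ℝ := 4*s^2 - c^2 with hAdef
  have hApos : 0 < A := by nlinarith
  set α : ℝ := (2*s^2 - d^2)/A with hαdef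
  set βsq : ℝ := (4*s^2*d^2 - d^4 - s^2*c^2)/A with hβsqdef
  have hβsq0 : 0 ≤ βsq := by
    apply div_nonneg _ hApos.le
    nlinarith
  set β : ℝ := Real.sqrt βsq with hβdef
  have hβ2 : β^2 = βsq := Real.sq_sqrt hβsq0
  set v : EuclideanSpace ℝ (Fin m) := α • (p + q) + β • e with hvdef
  have hvD : v ∈ Pl.direction := by
    exact Submodule.add_mem _ (Submodule.smul_mem _ _ (Submodule.add_mem _ hpD hqD))
      (Submodule.smul_mem _ _ heD)
  have hpqn : ‖p + q‖^2 = A := by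
    rw [norm_add_sq_real, hpn, hqn, ← htdef]
    rw [hAdef]; nlinarith
  have hpqe : ⟪p + q, e⟫ = 0 := by rw [inner_add_left, hpe, hqe]; ring
  have hvn : ‖v‖^2 = α^2 * A + β^2 := by
    rw [hvdef, norm_add_sq_real, real_inner_smul_left, real_inner_smul_right, hpqe,
      norm_smul, norm_smul, mul_pow, mul_pow, hpqn, hen]
    simp [sq_abs, Real.norm_eq_abs]
  have hvs : ‖v‖^2 = s^2 := by
    rw [hvn, hβ2, hαdef, hβsqdef, div_pow, div_mul_eq_mul_div]
    rw [pow_two A, ← div_div, mul_div_assoc, div_self hApos.ne', mul_one, ← add_div,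
      div_eq_iff hApos.ne', hAdef]
    ring
  have hpv : ⟪p, v⟫ = α * (A/2) := by
    rw [hvdef, inner_add_right, real_inner_smul_right, real_inner_smul_right, hpe,
      inner_add_right, real_inner_self_eq_norm_sq, hpn, ← htdef]
    have : s^2 + t = A/2 := by rw [hAdef]; linarith
    rw [← this]; ring
  have hqv : ⟪q, v⟫ = α * (A/2) := by
    rw [hvdef, inner_add_right, real_inner_smul_right, real_inner_smul_right, hqe,
      inner_add_right, real_inner_comm p q, ← htdef, real_inner_self_eq_norm_sq, hqn]
    have : t + s^2 = A/2 := by rw [hAdef]; linarith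
    rw [← this]; ring
  have hαA : α * A = 2*s^2 - d^2 := by rw [hαdef]; field_simp
  refine ⟨O + v, ?_, ?_, ?_, ?_⟩
  · have := AffineSubspace.vadd_mem_of_mem_direction hvD hO
    simpa [vadd_eq_add, add_comm] using this
  · have h1 : (O + v) - O = v := by abel
    rw [dist_eq_norm, h1]
    exact sqeq (norm_nonneg _) hs.le (by rw [hvs])
  · rw [dist_eq_norm]
    have h1 : P - (O + v) = p - v := by rw [hpdef]; abel
    rw [h1]
    apply sqeq (norm_nonneg _) hd.le
    rw [norm_sub_sq_real, hpn, hpv, hvs]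
    nlinarith
  · rw [dist_eq_norm]
    have h1 : (O + v) - Q = v - q := by rw [hqdef]; abel
    rw [h1]
    apply sqeq (norm_nonneg _) hd.le
    rw [norm_sub_sq_real, real_inner_comm, hqv, hvs, hqn]
    nlinarith

lemma aux_mid (m : ℕ) (s : ℝ) (hs : 0 < s)
    (Pl : AffineSubspace ℝ (EuclideanSpace ℝ (Fin m)))
    (O : EuclideanSpace ℝ (Fin m)) (hO : O ∈ Pl)
    (P Q : EuclideanSpace ℝ (Fin m)) (hP : P ∈ Pl) (hQ : Q ∈ Pl)
    (hPs : dist P O = s) (hQs : dist Q O = s) (hlt : dist P Q < 2*s) :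
    ∃ M, M ∈ Pl ∧ dist M O = s ∧ (dist P M)^2 ≤ (dist P Q)^2/2 ∧
      (dist M Q)^2 ≤ (dist P Q)^2/2 := by
  classical
  set p : EuclideanSpace ℝ (Fin m) := P - O with hpdef
  set q : EuclideanSpace ℝ (Fin m) := Q - O with hqdef
  have hpD : p ∈ Pl.direction := by
    simpa [hpdef] using AffineSubspace.vsub_mem_direction hP hO
  have hqD : q ∈ Pl.direction := by
    simpa [hqdef] using AffineSubspace.vsub_mem_direction hQ hO
  have hpn : ‖p‖ = s := by rw [hpdef, ← dist_eq_norm]; exact hPs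
  have hqn : ‖q‖ = s := by rw [hqdef, ← dist_eq_norm]; exact hQs
  set c : ℝ := dist P Q with hcdef
  have hc0 : 0 ≤ c := dist_nonneg
  set t : ℝ := ⟪p, q⟫ with htdef
  have hct : c^2 = 2*s^2 - 2*t := by
    have hpq : P - Q = p - q := by rw [hpdef, hqdef]; abel
    rw [hcdef, dist_eq_norm, hpq, norm_sub_sq_real, hpn, hqn, ← htdef]
    ring
  set L : ℝ := ‖p + q‖ with hLdef
  have hL2 : L^2 = 4*s^2 - c^2 := by
    rw [hLdef, norm_add_sq_real, hpn, hqn, ← htdef]; linarith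
  have hLpos : 0 < L := by
    have h1 : 0 < L^2 := by nlinarith
    have h0 : 0 ≤ L := norm_nonneg _
    nlinarith
  have hLle : L ≤ 2*s := by nlinarith
  refine ⟨O + (s/L) • (p + q), ?_, ?_, ?_, ?_⟩
  · have := AffineSubspace.vadd_mem_of_mem_direction
      (Submodule.smul_mem _ (s/L) (Submodule.add_mem _ hpD hqD)) hO
    simpa [vadd_eq_add, add_comm] using this
  · have h1 : (O + (s/L) • (p + q)) - O = (s/L) • (p + q) := by abel
    rw [dist_eq_norm, h1, norm_smul, ← hLdef, Real.norm_eq_abs,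
      abs_of_nonneg (by positivity : (0:ℝ) ≤ s/L)]
    field_simp
  · have h1 : P - (O + (s/L) • (p + q)) = p - (s/L) • (p + q) := by rw [hpdef]; abel
    rw [dist_eq_norm, h1, norm_sub_sq_real, real_inner_smul_right, norm_smul,
      Real.norm_eq_abs, abs_of_nonneg (by positivity : (0:ℝ) ≤ s/L), mul_pow, ← hLdef,
      inner_add_right, real_inner_self_eq_norm_sq, hpn, ← htdef]
    have hst : s^2 + t = L^2/2 := by linarith
    rw [hst]
    have e1 : s^2 - 2*(s/L*(L^2/2)) + (s/L)^2 * L^2 = 2*s^2 - s*L := by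
      field_simp; ring
    rw [e1]
    nlinarith [mul_nonneg (sub_nonneg.mpr hLle) hLpos.le]
  · have h1 : (O + (s/L) • (p + q)) - Q = (s/L) • (p + q) - q := by rw [hqdef]; abel
    rw [dist_eq_norm, h1, norm_sub_sq_real, real_inner_smul_left, norm_smul,
      Real.norm_eq_abs, abs_of_nonneg (by positivity : (0:ℝ) ≤ s/L), mul_pow, ← hLdef,
      inner_add_left, real_inner_self_eq_norm_sq, hqn, ← htdef]
    have hst : t + s^2 = L^2/2 := by linarith
    rw [hst]
    have e1 : (s/L)^2 * L^2 - 2*(s/L*(L^2/2)) + s^2 = 2*s^2 - s*L := by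
      field_simp; ring
    rw [e1]
    nlinarith

def SChain (m : ℕ) (Pl : AffineSubspace ℝ (EuclideanSpace ℝ (Fin m)))
    (O : EuclideanSpace ℝ (Fin m)) (s d : ℝ)
    (P Q : EuclideanSpace ℝ (Fin m)) : Prop :=
  ∃ (n : ℕ) (X : ℕ → EuclideanSpace ℝ (Fin m)), X 0 = P ∧ X (n+2) = Q ∧
    (∀ i, i ≤ n+2 → X i ∈ Pl ∧ dist (X i) O = s) ∧
    (∀ i, i ≤ n+1 → dist (X i) (X (i+1)) = d)

lemma chain_concat {m : ℕ} {Pl : AffineSubspace ℝ (EuclideanSpace ℝ (Fin m))}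
    {O : EuclideanSpace ℝ (Fin m)} {s d : ℝ} {P M Q : EuclideanSpace ℝ (Fin m)}
    (h1 : SChain m Pl O s d P M) (h2 : SChain m Pl O s d M Q) :
    SChain m Pl O s d P Q := by
  obtain ⟨n, X, hX0, hXn, hXmem, hXstep⟩ := h1
  obtain ⟨l, Y, hY0, hYl, hYmem, hYstep⟩ := h2
  refine ⟨n + l + 2, fun i => if i ≤ n+2 then X i else Y (i - (n+2)), ?_, ?_, ?_, ?_⟩
  · simp [hX0]
  · have h : ¬ (n + l + 2 + 2 ≤ n + 2) := by omega
    simp only [h, if_false]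
    have : n + l + 2 + 2 - (n+2) = l + 2 := by omega
    rw [this, hYl]
  · intro i hi
    by_cases h : i ≤ n + 2
    · simp only [h, if_true]; exact hXmem i h
    · simp only [h, if_false]; exact hYmem _ (by omega)
  · intro i hi
    by_cases h : i + 1 ≤ n + 2
    · have h' : i ≤ n + 2 := by omega
      simp only [h, h', if_true]
      exact hXstep i (by omega)
    · by_cases h' : i ≤ n + 2
      · -- i = n + 2
        have hieq : i = n + 2 := by omega
        simp only [h, h', if_true, if_false]
        have : i + 1 - (n + 2) = 1 := by omega
        rw [this, hieq, hXn, ← hY0]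
        exact hYstep 0 (by omega)
      · simp only [h, h', if_false]
        have e1 : i + 1 - (n+2) = (i - (n+2)) + 1 := by omega
        rw [e1]
        exact hYstep _ (by omega)

lemma chain_two (N m : ℕ) (hN : 2 ≤ N) (s d : ℝ) (hs : 0 < s) (hd : 0 < d)
    (Pl : AffineSubspace ℝ (EuclideanSpace ℝ (Fin m)))
    (hPl : Module.finrank ℝ Pl.direction = N + 1)
    (O : EuclideanSpace ℝ (Fin m)) (hO : O ∈ Pl)
    (P Q : EuclideanSpace ℝ (Fin m)) (hP : P ∈ Pl) (hQ : Q ∈ Pl)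
    (hPs : dist P O = s) (hQs : dist Q O = s)
    (hsmall : s^2 * (dist P Q)^2 ≤ d^2 * (4*s^2 - d^2)) (hlt : dist P Q < 2*s) :
    SChain m Pl O s d P Q := by
  obtain ⟨W, hW, hWs, hPW, hWQ⟩ := aux_step N m hN s d hs hd Pl hPl O hO P Q hP hQ
    hPs hQs hsmall hlt
  refine ⟨0, fun i => if i = 0 then P else if i = 1 then W else Q, by simp, by simp, ?_, ?_⟩
  · intro i hi
    interval_cases i <;> simp [hP, hPs, hW, hWs, hQ, hQs]
  · intro i hi
    interval_cases i <;> simp [hPW, hWQ]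

lemma chain_main (N m : ℕ) (hN : 2 ≤ N) (s d ε : ℝ) (hs : 0 < s) (hd : 0 < d)
    (hε : 0 < ε) (hεs : s^2 * ε^2 ≤ d^2 * (4*s^2 - d^2))
    (Pl : AffineSubspace ℝ (EuclideanSpace ℝ (Fin m)))
    (hPl : Module.finrank ℝ Pl.direction = N + 1)
    (O : EuclideanSpace ℝ (Fin m)) (hO : O ∈ Pl) :
    ∀ (j : ℕ) (P Q : EuclideanSpace ℝ (Fin m)), P ∈ Pl → Q ∈ Pl →
      dist P O = s → dist Q O = s → dist P Q < 2*s →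
      (dist P Q)^2 ≤ ε^2 * 2^j → SChain m Pl O s d P Q := by
  intro j
  induction j with
  | zero =>
    intro P Q hP hQ hPs hQs hlt hj
    apply chain_two N m hN s d hs hd Pl hPl O hO P Q hP hQ hPs hQs _ hlt
    have h1 : s^2 * (dist P Q)^2 ≤ s^2 * ε^2 := by
      apply mul_le_mul_of_nonneg_left _ (by positivity)
      simpa using hj
    linarith
  | succ j ih =>
    intro P Q hP hQ hPs hQs hlt hj
    obtain ⟨M, hM, hMs, hPM, hMQ⟩ := aux_mid m s hs Pl O hO P Q hP hQ hPs hQs hlt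
    have hhalf : (dist P Q)^2 / 2 ≤ ε^2 * 2^j := by
      rw [pow_succ 2 j] at hj; linarith
    have h4s : (dist P Q)^2 < (2*s)^2 := by
      nlinarith [dist_nonneg (x := P) (y := Q)]
    have hPM2 : dist P M < 2*s := by
      nlinarith [dist_nonneg (x := P) (y := M), dist_nonneg (x := P) (y := Q)]
    have hMQ2 : dist M Q < 2*s := by
      nlinarith [dist_nonneg (x := M) (y := Q), dist_nonneg (x := P) (y := Q)]
    exact chain_concat
      (ih P M hP hM hPs hMs hPM2 (le_trans hPM hhalf))
      (ih M Q hM hQ hMs hQs hMQ2 (le_trans hMQ hhalf))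

lemma chain_of_lt (N m : ℕ) (hN : 2 ≤ N) (s d : ℝ) (hs : 0 < s) (hd : 0 < d)
    (hd2 : d < 2*s)
    (Pl : AffineSubspace ℝ (EuclideanSpace ℝ (Fin m)))
    (hPl : Module.finrank ℝ Pl.direction = N + 1)
    (O : EuclideanSpace ℝ (Fin m)) (hO : O ∈ Pl)
    (P Q : EuclideanSpace ℝ (Fin m)) (hP : P ∈ Pl) (hQ : Q ∈ Pl)
    (hPs : dist P O = s) (hQs : dist Q O = s) (hlt : dist P Q < 2*s) :
    SChain m Pl O s d P Q := by
  have h4d : 0 < 4*s^2 - d^2 := by nlinarith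
  set ε : ℝ := d * Real.sqrt (4*s^2 - d^2) / (2*s) with hεdef
  have hε : 0 < ε := by
    apply div_pos (mul_pos hd (Real.sqrt_pos.mpr h4d)) (by linarith)
  have hε2 : ε^2 = d^2 * (4*s^2 - d^2) / (4*s^2) := by
    rw [hεdef, div_pow, mul_pow, Real.sq_sqrt h4d.le]
    ring_nf
  have hεs : s^2 * ε^2 ≤ d^2 * (4*s^2 - d^2) := by
    rw [hε2]
    have he : s^2 * (d^2*(4*s^2-d^2)/(4*s^2)) = d^2*(4*s^2-d^2)/4 := by
      field_simp
    have hpos : 0 ≤ d^2*(4*s^2-d^2) := mul_nonneg (sq_nonneg d) h4d.le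
    rw [he]; linarith
  obtain ⟨j, hj⟩ := pow_unbounded_of_one_lt ((dist P Q)^2 / ε^2) (one_lt_two (α := ℝ))
  apply chain_main N m hN s d ε hs hd hε hεs Pl hPl O hO j P Q hP hQ hPs hQs hlt
  have := hj.le
  rw [div_le_iff₀ (by positivity)] at this
  linarith [this]

theorem stmt7 (N m : ℕ) (hN : 2 ≤ N) (hm : N + 1 ≤ m) (s d : ℝ) (hs : 0 < s)
    (hd : 0 < d) (hd2 : d < 2 * s)
    (Pl : AffineSubspace ℝ (EuclideanSpace ℝ (Fin m)))
    (hPl : Module.finrank ℝ Pl.direction = N + 1)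
    (O : EuclideanSpace ℝ (Fin m)) (hO : O ∈ Pl)
    (U V : EuclideanSpace ℝ (Fin m)) (hU : U ∈ Pl) (hV : V ∈ Pl)
    (hUO : dist U O = s) (hVO : dist V O = s) (hUV : U ≠ V) :
    ∃ (k : ℕ) (X : Fin (k + 1) → EuclideanSpace ℝ (Fin m)),
      (∀ i, X i ∈ Pl ∧ dist (X i) O = s) ∧
      dist U (X 0) = d ∧
      (∀ i : Fin k, dist (X i.castSucc) (X i.succ) = d) ∧
      dist (X (Fin.last k)) V = d := by
  have hd2' : d < 2*s := hd2
  have hchain : SChain m Pl O s d U V := by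
    have hle : dist U V ≤ 2*s := by
      calc dist U V ≤ dist U O + dist O V := dist_triangle _ _ _
        _ = 2*s := by rw [dist_comm O V, hUO, hVO]; ring
    rcases lt_or_eq_of_le hle with hlt | heq
    · exact chain_of_lt N m hN s d hs hd hd2' Pl hPl O hO U V hU hV hUO hVO hlt
    · -- antipodal-ish case: insert an intermediate point W
      obtain ⟨e, heD, hen, hue, hve⟩ := aux_orth N m hN Pl.direction hPl (U - O) (V - O)
      set W : EuclideanSpace ℝ (Fin m) := O + s • e with hWdef
      have hW : W ∈ Pl := by
        have := AffineSubspace.vadd_mem_of_mem_direction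
          (Submodule.smul_mem _ s heD) hO
        simpa [hWdef, vadd_eq_add, add_comm] using this
      have hWs : dist W O = s := by
        have h1 : W - O = s • e := by rw [hWdef]; abel
        rw [dist_eq_norm, h1, norm_smul, hen, Real.norm_eq_abs, abs_of_pos hs, mul_one]
      have hUW2 : (dist U W)^2 = 2*s^2 := by
        have h1 : U - W = (U - O) - s • e := by rw [hWdef]; abel
        rw [dist_eq_norm, h1, norm_sub_sq_real, real_inner_smul_right, hue, norm_smul,
          hen, Real.norm_eq_abs, abs_of_pos hs]
        have : ‖U - O‖ = s := by rw [← dist_eq_norm]; exact hUO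
        rw [this]; ring
      have hWV2 : (dist W V)^2 = 2*s^2 := by
        have h1 : W - V = s • e - (V - O) := by rw [hWdef]; abel
        rw [dist_eq_norm, h1, norm_sub_sq_real, real_inner_smul_left, norm_smul,
          hen, Real.norm_eq_abs, abs_of_pos hs]
        have h2 : ⟪e, V - O⟫ = 0 := by rw [real_inner_comm]; exact hve
        have h3 : ‖V - O‖ = s := by rw [← dist_eq_norm]; exact hVO
        rw [h2, h3]; ring
      have hUW : dist U W < 2*s := by
        nlinarith [dist_nonneg (x := U) (y := W)]
      have hWV : dist W V < 2*s := by
        nlinarith [dist_nonneg (x := W) (y := V)]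
      exact chain_concat
        (chain_of_lt N m hN s d hs hd hd2' Pl hPl O hO U W hU hW hUO hWs hUW)
        (chain_of_lt N m hN s d hs hd hd2' Pl hPl O hO W V hW hV hWs hVO hWV)
  obtain ⟨n, X, hX0, hXn, hmem, hstep⟩ := hchain
  refine ⟨n, fun i => X (i.val + 1), ?_, ?_, ?_, ?_⟩
  · intro i
    exact hmem (i.val + 1) (by omega)
  · simp only [Fin.val_zero]
    rw [← hX0]
    exact hstep 0 (by omega)
  · intro i
    simp only [Fin.coe_castSucc, Fin.val_succ]
    exact hstep (i.val + 1) (by omega)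
  · simp only [Fin.val_last]
    rw [← hXn]
    exact hstep (n + 1) (by omega)
end

section
/- Let τ be an r-coloring (r ≥ 4) of the product configuration S × B, where S is a set of 3s+1 points with all pairwise distances equal to a (a regular 3s-dimensional simplex of side a) and B = {v₁,…,v_{s+1}} is a planar path with ‖v_i − v_{i+1}‖ = b for 1 ≤ i ≤ s and ‖v₁ − v_{s+1}‖ = a, embedded in orthogonal subspaces. If τ assigns different colors to every pair of points at distance a, then there exist indices i ∈ {1,…,s} and two points x, x' ∈ S such that the four points (x, v_i), (x, v_{i+1}), (x', v_i), (x', v_{i+1}) receive four pairwise distinct colors; these four points form a rectangle with side lengths a and b. -/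
theorem stmt14 (n₁ n₂ s r : ℕ) (a b : ℝ)
    (ha : 0 < a) (hb : 0 < b) (hs2 : 2 ≤ s) (hsab : a / b ≤ (s : ℝ)) (hr : 4 ≤ r)
    (S : Fin (3 * s + 1) → EuclideanSpace ℝ (Fin n₁))
    (hS : ∀ i j, i ≠ j → dist (S i) (S j) = a)
    (v : Fin (s + 1) → EuclideanSpace ℝ (Fin n₂))
    (hvb : ∀ i : Fin s, dist (v i.castSucc) (v i.succ) = b)
    (hva : dist (v 0) (v (Fin.last s)) = a)
    (τ : WithLp 2 (EuclideanSpace ℝ (Fin n₁) × EuclideanSpace ℝ (Fin n₂)) → Fin r)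
    (hτ : ∀ (i j : Fin (3 * s + 1)) (k l : Fin (s + 1)),
      dist ((WithLp.equiv 2 (EuclideanSpace ℝ (Fin n₁) × EuclideanSpace ℝ (Fin n₂))).symm (S i, v k))
          ((WithLp.equiv 2 (EuclideanSpace ℝ (Fin n₁) × EuclideanSpace ℝ (Fin n₂))).symm (S j, v l)) = a →
      τ ((WithLp.equiv 2 (EuclideanSpace ℝ (Fin n₁) × EuclideanSpace ℝ (Fin n₂))).symm (S i, v k)) ≠
        τ ((WithLp.equiv 2 (EuclideanSpace ℝ (Fin n₁) × EuclideanSpace ℝ (Fin n₂))).symm (S j, v l))) :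
    ∃ (i : Fin s) (j j' : Fin (3 * s + 1)), j ≠ j' ∧
      ∀ (p₁ p₂ p₃ p₄ : WithLp 2 (EuclideanSpace ℝ (Fin n₁) × EuclideanSpace ℝ (Fin n₂))),
        p₁ = (WithLp.equiv 2 _).symm (S j, v i.castSucc) →
        p₂ = (WithLp.equiv 2 _).symm (S j, v i.succ) →
        p₃ = (WithLp.equiv 2 _).symm (S j', v i.castSucc) →
        p₄ = (WithLp.equiv 2 _).symm (S j', v i.succ) →
        (dist p₁ p₂ = b ∧ dist p₃ p₄ = b ∧ dist p₁ p₃ = a ∧ dist p₂ p₄ = a) ∧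
        (τ p₁ ≠ τ p₂ ∧ τ p₁ ≠ τ p₃ ∧ τ p₁ ≠ τ p₄ ∧
          τ p₂ ≠ τ p₃ ∧ τ p₂ ≠ τ p₄ ∧ τ p₃ ≠ τ p₄) := by
  classical
  set q := (WithLp.equiv 2 (EuclideanSpace ℝ (Fin n₁) × EuclideanSpace ℝ (Fin n₂))).symm with hq
  -- distance formula
  have hd : ∀ (j j' : Fin (3 * s + 1)) (k k' : Fin (s + 1)),
      dist (q (S j, v k)) (q (S j', v k')) =
        Real.sqrt (dist (S j) (S j') ^ 2 + dist (v k) (v k') ^ 2) := by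
    intro j j' k k'
    rw [WithLp.prod_dist_eq_of_L2]
    rfl
  -- column distances are a
  have hcolD : ∀ (j j' : Fin (3 * s + 1)) (k : Fin (s + 1)), j ≠ j' →
      dist (q (S j, v k)) (q (S j', v k)) = a := by
    intro j j' k h
    rw [hd, hS j j' h, dist_self]
    simpa using Real.sqrt_sq ha.le
  -- same-row distances
  have hrowD : ∀ (j : Fin (3 * s + 1)) (k k' : Fin (s + 1)),
      dist (q (S j, v k)) (q (S j, v k')) = dist (v k) (v k') := by
    intro j k k'
    rw [hd, dist_self]
    simpa using Real.sqrt_sq dist_nonneg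
  -- the coloring as a matrix
  set c : Fin (3 * s + 1) → Fin (s + 1) → Fin r := fun j k => τ (q (S j, v k)) with hc
  -- columns are rainbow
  have hcol : ∀ (j j' : Fin (3 * s + 1)) (k : Fin (s + 1)), j ≠ j' → c j k ≠ c j' k := by
    intro j j' k h
    exact hτ j j' k k (hcolD j j' k h)
  -- endpoints of each row differ
  have hends : ∀ j : Fin (3 * s + 1), c j 0 ≠ c j (Fin.last s) := by
    intro j
    apply hτ j j 0 (Fin.last s)
    rw [hrowD, hva]
  -- each row has a color change
  have hchange : ∀ j : Fin (3 * s + 1), ∃ i : Fin s, c j i.castSucc ≠ c j i.succ := by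
    intro j
    by_contra h
    push_neg at h
    have key : ∀ k : Fin (s + 1), c j 0 = c j k := by
      intro k
      induction k using Fin.induction with
      | zero => rfl
      | succ i ih => exact ih.trans (h i)
    exact hends j (key (Fin.last s))
  choose F hF using hchange
  -- pigeonhole: some step has at least 4 changing rows
  have hcard : Fintype.card (Fin s) * 3 < Fintype.card (Fin (3 * s + 1)) := by
    simp only [Fintype.card_fin]; omega
  obtain ⟨i, hi⟩ := Fintype.exists_lt_card_fiber_of_mul_lt_card (f := F) hcard
  set T : Finset (Fin (3 * s + 1)) := Finset.univ.filter fun j => F j = i with hT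
  have hTchange : ∀ j ∈ T, c j i.castSucc ≠ c j i.succ := by
    intro j hj
    have : F j = i := (Finset.mem_filter.mp hj).2
    rw [← this]; exact hF j
  have hT4 : 4 ≤ T.card := hi
  -- bad pairs
  set Bad1 : Finset (Fin (3 * s + 1) × Fin (3 * s + 1)) :=
    T.offDiag.filter (fun p => c p.1 i.castSucc = c p.2 i.succ) with hB1
  set Bad2 : Finset (Fin (3 * s + 1) × Fin (3 * s + 1)) :=
    T.offDiag.filter (fun p => c p.2 i.castSucc = c p.1 i.succ) with hB2
  have hinj : ∀ (j j' : Fin (3 * s + 1)) (k : Fin (s + 1)), c j k = c j' k → j = j' := by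
    intro j j' k h
    by_contra hne
    exact hcol j j' k hne h
  have hB1card : Bad1.card ≤ T.card := by
    apply Finset.card_le_card_of_injOn (fun p => p.1)
    · intro p hp
      exact (Finset.mem_offDiag.mp (Finset.mem_filter.mp hp).1).1
    · intro p hp q hq hpq
      have hp' := Finset.mem_filter.mp hp
      have hq' := Finset.mem_filter.mp hq
      have hpq' : p.1 = q.1 := hpq
      have h2 : c p.2 i.succ = c q.2 i.succ := by
        rw [← hp'.2, ← hq'.2, hpq']
      exact Prod.ext hpq' (hinj _ _ _ h2)
  have hB2card : Bad2.card ≤ T.card := by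
    apply Finset.card_le_card_of_injOn (fun p => p.2)
    · intro p hp
      exact (Finset.mem_offDiag.mp (Finset.mem_filter.mp hp).1).2.1
    · intro p hp q hq hpq
      have hp' := Finset.mem_filter.mp hp
      have hq' := Finset.mem_filter.mp hq
      have hpq' : p.2 = q.2 := hpq
      have h2 : c p.1 i.succ = c q.1 i.succ := by
        rw [← hp'.2, ← hq'.2, hpq']
      exact Prod.ext (hinj _ _ _ h2) hpq'
  have hBadlt : (Bad1 ∪ Bad2).card < T.offDiag.card := by
    have h1 : (Bad1 ∪ Bad2).card ≤ Bad1.card + Bad2.card := Finset.card_union_le _ _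
    rw [Finset.offDiag_card]
    have h3 : 3 * T.card < T.card * T.card := by
      calc 3 * T.card < 4 * T.card := by omega
        _ ≤ T.card * T.card := Nat.mul_le_mul_right _ hT4
    omega
  have hns : ¬ T.offDiag ⊆ Bad1 ∪ Bad2 := fun h => absurd (Finset.card_le_card h) (by omega)
  obtain ⟨p, hpD, hpB⟩ := Finset.not_subset.mp hns
  obtain ⟨hp1, hp2, hpne⟩ := Finset.mem_offDiag.mp hpD
  rw [Finset.mem_union] at hpB
  push_neg at hpB
  have hgood1 : c p.1 i.castSucc ≠ c p.2 i.succ := by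
    intro h; exact hpB.1 (Finset.mem_filter.mpr ⟨hpD, h⟩)
  have hgood2 : c p.2 i.castSucc ≠ c p.1 i.succ := by
    intro h; exact hpB.2 (Finset.mem_filter.mpr ⟨hpD, h⟩)
  refine ⟨i, p.1, p.2, hpne, ?_⟩
  intro p₁ p₂ p₃ p₄ h1 h2 h3 h4
  subst h1 h2 h3 h4
  refine ⟨⟨?_, ?_, ?_, ?_⟩, ?_, ?_, ?_, ?_, ?_, ?_⟩
  · rw [hrowD]; exact hvb i
  · rw [hrowD]; exact hvb i
  · exact hcolD _ _ _ hpne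
  · exact hcolD _ _ _ hpne
  · exact hTchange p.1 hp1
  · exact hcol _ _ _ hpne
  · exact hgood1
  · exact fun h => hgood2 h.symm
  · exact hcol _ _ _ hpne
  · exact hTchange p.2 hp2
end

section
/- Let C₁, C₂, C₃, C₄ be finite sets of colors, each of size at least 2. If there is no system of pairwise distinct representatives (i.e., no choice c_i ∈ C_i with all c_i distinct) and no color belonging to all four sets, then up to permuting the indices and relabeling colors, either (Type A) C₁ = {1,2}, C₂ = {2,3}, C₃ = {1,3}, and C₄ ⊆ {1,2,3}, or (Type B) C₁ = C₂ = C₃ = {1,2} and C₄ ⊇ {3,4} with C₄ ∩ {1,2} = ∅. -/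
open Finset

lemma perm4 (i j k l : Fin 4) (hij : i ≠ j) (hik : i ≠ k) (hil : i ≠ l)
    (hjk : j ≠ k) (hjl : j ≠ l) (hkl : k ≠ l) :
    ∃ σ : Equiv.Perm (Fin 4), σ 0 = i ∧ σ 1 = j ∧ σ 2 = k ∧ σ 3 = l := by
  have hinj : Function.Injective ![i, j, k, l] := by
    intro x y hxy
    fin_cases x <;> fin_cases y <;> simp_all
  exact ⟨Equiv.ofBijective _ (Finite.injective_iff_bijective.mp hinj), rfl, rfl, rfl, rfl⟩

lemma fourth (i j k : Fin 4) (hij : i ≠ j) (hik : i ≠ k) (hjk : j ≠ k) :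
    ∃ l : Fin 4, l ≠ i ∧ l ≠ j ∧ l ≠ k := by
  revert hij hik hjk; revert i j k; decide

lemma allfour (i j k l : Fin 4) (hij : i ≠ j) (hik : i ≠ k) (hil : i ≠ l)
    (hjk : j ≠ k) (hjl : j ≠ l) (hkl : k ≠ l) (m : Fin 4) :
    m = i ∨ m = j ∨ m = k ∨ m = l := by
  revert hij hik hil hjk hjl hkl; revert i j k l m; decide

theorem stmt15 (C : Fin 4 → Finset ℕ) (hcard : ∀ i, 2 ≤ (C i).card)
    (hnoSDR : ¬∃ f : Fin 4 → ℕ, (∀ i, f i ∈ C i) ∧ Function.Injective f)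
    (hnoCommon : ¬∃ c : ℕ, ∀ i, c ∈ C i) :
    ∃ (σ : Equiv.Perm (Fin 4)) (c₁ c₂ c₃ c₄ : ℕ),
      c₁ ≠ c₂ ∧ c₁ ≠ c₃ ∧ c₁ ≠ c₄ ∧ c₂ ≠ c₃ ∧ c₂ ≠ c₄ ∧ c₃ ≠ c₄ ∧
      ((C (σ 0) = {c₁, c₂} ∧ C (σ 1) = {c₂, c₃} ∧ C (σ 2) = {c₁, c₃} ∧
          C (σ 3) ⊆ {c₁, c₂, c₃}) ∨
        (C (σ 0) = {c₁, c₂} ∧ C (σ 1) = {c₁, c₂} ∧ C (σ 2) = {c₁, c₂} ∧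
          {c₃, c₄} ⊆ C (σ 3) ∧ C (σ 3) ∩ {c₁, c₂} = ∅)) := by
  classical
  have hhall : ¬ ∀ s : Finset (Fin 4), s.card ≤ (s.biUnion C).card := by
    intro h
    obtain ⟨f, hfinj, hf⟩ := (Finset.all_card_le_biUnion_card_iff_exists_injective C).mp h
    exact hnoSDR ⟨f, hf, hfinj⟩
  push_neg at hhall
  obtain ⟨s, hs⟩ := hhall
  -- s is nonempty
  have hne : s.Nonempty := by
    rcases s.eq_empty_or_nonempty with rfl | h
    · simp at hs
    · exact h
  obtain ⟨i₀, hi₀⟩ := hne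
  have hsub : ∀ i ∈ s, C i ⊆ s.biUnion C := fun i hi => Finset.subset_biUnion_of_mem C hi
  have h2 : 2 ≤ (s.biUnion C).card :=
    le_trans (hcard i₀) (Finset.card_le_card (hsub i₀ hi₀))
  have hs4 : s.card ≤ 4 := le_trans (Finset.card_le_card (Finset.subset_univ s)) (by simp)
  have hcase : s.card = 3 ∨ s.card = 4 := by omega
  rcases hcase with h3 | h4
  · -- three sets with union of card 2 : Type B
    obtain ⟨i, j, k, hij, hik, hjk, rfl⟩ := Finset.card_eq_three.mp h3
    set T := ({i, j, k} : Finset (Fin 4)).biUnion C with hT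
    have hT2 : T.card = 2 := by omega
    have hCeq : ∀ m ∈ ({i, j, k} : Finset (Fin 4)), C m = T := by
      intro m hm
      exact Finset.eq_of_subset_of_card_le (hsub m hm) (by have := hcard m; omega)
    obtain ⟨a, b, hab, hTab⟩ := Finset.card_eq_two.mp hT2
    obtain ⟨l, hli, hlj, hlk⟩ := fourth i j k hij hik hjk
    have hCi : C i = {a, b} := by rw [hCeq i (by simp), hTab]
    have hCj : C j = {a, b} := by rw [hCeq j (by simp), hTab]
    have hCk : C k = {a, b} := by rw [hCeq k (by simp), hTab]
    have hdisj : ∀ x ∈ C l, x ≠ a ∧ x ≠ b := by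
      intro x hx
      constructor <;> rintro rfl <;>
      · apply hnoCommon
        refine ⟨x, fun m => ?_⟩
        rcases allfour i j k l hij hik (Ne.symm hli) hjk (Ne.symm hlj) (Ne.symm hlk) m with
          rfl | rfl | rfl | rfl <;> simp [hCi, hCj, hCk, hx]
    obtain ⟨c, hc, d, hd, hcd⟩ := Finset.one_lt_card.mp (hcard l)
    obtain ⟨σ, h0, h1, h2', h3'⟩ := perm4 i j k l hij hik (Ne.symm hli) hjk (Ne.symm hlj)
      (Ne.symm hlk)
    refine ⟨σ, a, b, c, d, hab, (hdisj c hc).1.symm, (hdisj d hd).1.symm,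
      (hdisj c hc).2.symm, (hdisj d hd).2.symm, hcd, Or.inr ?_⟩
    rw [h0, h1, h2', h3']
    refine ⟨hCi, hCj, hCk, ?_, ?_⟩
    · intro x hx
      simp only [Finset.mem_insert, Finset.mem_singleton] at hx
      rcases hx with rfl | rfl <;> assumption
    · rw [Finset.eq_empty_iff_forall_notMem]
      intro x hx
      simp only [Finset.mem_inter, Finset.mem_insert, Finset.mem_singleton] at hx
      obtain ⟨hx1, hx2⟩ := hx
      rcases hx2 with rfl | rfl
      · exact (hdisj x hx1).1 rfl
      · exact (hdisj x hx1).2 rfl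
  · -- all four sets with union of card ≤ 3
    have hsu : s = Finset.univ := Finset.eq_univ_of_card s (by simpa using h4)
    subst hsu
    set U := (Finset.univ : Finset (Fin 4)).biUnion C with hU
    have hsubU : ∀ i, C i ⊆ U := fun i => hsub i (Finset.mem_univ i)
    have hU3 : U.card = 2 ∨ U.card = 3 := by omega
    rcases hU3 with hU2 | hU3
    · -- union card 2 : all sets equal, common color, contradiction
      exfalso
      obtain ⟨a, b, hab, hUab⟩ := Finset.card_eq_two.mp hU2
      apply hnoCommon
      refine ⟨a, fun m => ?_⟩
      have : C m = U := Finset.eq_of_subset_of_card_le (hsubU m) (by have := hcard m; omega)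
      rw [this, hUab]; simp
    · -- union card 3 : Type A
      obtain ⟨a, b, c, hab, hac, hbc, hUabc⟩ := Finset.card_eq_three.mp hU3
      push_neg at hnoCommon
      have key : ∀ x y z : ℕ, x ≠ y → x ≠ z → y ≠ z → U = {x, y, z} →
          ∃ i, C i = {y, z} := by
        intro x y z hxy hxz hyz hUeq
        obtain ⟨i, hi⟩ := hnoCommon x
        refine ⟨i, Finset.eq_of_subset_of_card_le ?_ ?_⟩
        · intro w hw
          have hwU : w ∈ U := hsubU i hw
          rw [hUeq] at hwU
          simp only [Finset.mem_insert, Finset.mem_singleton] at hwU ⊢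
          rcases hwU with rfl | h | h
          · exact absurd hw hi
          · exact Or.inl h
          · exact Or.inr h
        · calc ({y, z} : Finset ℕ).card ≤ 2 := Finset.card_insert_le _ _ |>.trans (by simp)
            _ ≤ (C i).card := hcard i
      obtain ⟨i₂, hi₂⟩ := key c a b hac.symm hbc.symm hab (by rw [hUabc]; ext w; simp; tauto)
      obtain ⟨i₀, hi₀'⟩ := key a b c hab hac hbc hUabc
      obtain ⟨i₁, hi₁⟩ := key b a c hab.symm hbc hac (by rw [hUabc]; ext w; simp; tauto)
      have d01 : i₀ ≠ i₁ := by
        intro h; rw [h, hi₁] at hi₀'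
        have : a ∈ ({b, c} : Finset ℕ) := by rw [← hi₀']; simp
        simp only [Finset.mem_insert, Finset.mem_singleton] at this; tauto
      have d02 : i₀ ≠ i₂ := by
        intro h; rw [h, hi₂] at hi₀'
        have : a ∈ ({b, c} : Finset ℕ) := by rw [← hi₀']; simp
        simp only [Finset.mem_insert, Finset.mem_singleton] at this; tauto
      have d12 : i₁ ≠ i₂ := by
        intro h; rw [h, hi₂] at hi₁
        have : b ∈ ({a, c} : Finset ℕ) := by rw [← hi₁]; simp
        simp only [Finset.mem_insert, Finset.mem_singleton] at this; tauto
      obtain ⟨i₃, h3i, h3j, h3k⟩ := fourth i₂ i₀ i₁ d02.symm d12.symm d01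
      obtain ⟨σ, h0, h1, h2', h3'⟩ := perm4 i₂ i₀ i₁ i₃ d02.symm d12.symm (Ne.symm h3i)
        d01 (Ne.symm h3j) (Ne.symm h3k)
      set e := max a (max b c) + 1 with he
      have hea : a ≠ e := by omega
      have heb : b ≠ e := by omega
      have hec : c ≠ e := by omega
      refine ⟨σ, a, b, c, e, hab, hac, hea, hbc, heb, hec, Or.inl ?_⟩
      rw [h0, h1, h2', h3']
      refine ⟨hi₂, hi₀', hi₁, ?_⟩
      intro w hw
      have := hsubU i₃ hw
      rwa [hUabc] at this
end
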